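/- Let F ⊆ ℝ²≥0 be a compact convex set and define the convex body semigroup 𝔉 = ⋃_{i∈ℕ} (i·F) ∩ ℕ². Then 𝔉 is a submonoid of (ℕ², +). -/

import Mathlib

open scoped Pointwise

def toQ (p : ℤ × ℤ) : ℚ × ℚ := ((p.1 : ℚ), (p.2 : ℚ))
def toR (p : ℤ × ℤ) : ℝ × ℝ := ((p.1 : ℝ), (p.2 : ℝ))
def isNat (p : ℤ × ℤ) : Prop := 0 ≤ p.1 ∧ 0 ≤ p.2
def inCone (n₁ n₂ a : ℤ × ℤ) : Prop :=
  ∃ q₁ q₂ : ℚ, 0 ≤ q₁ ∧ 0 ≤ q₂ ∧ toQ a = q₁ • toQ n₁ + q₂ • toQ n₂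
def onRay (n a : ℤ × ℤ) : Prop := ∃ q : ℚ, 0 ≤ q ∧ toQ a = q • toQ n


/-- The convex body semigroup `𝔉 = ⋃_{i∈ℕ} (i·F) ∩ ℕ²` of a compact convex
`F ⊆ ℝ²≥0` (with `0·F = {0}`), viewed inside `ℤ × ℤ`. -/
def cbs (F : Set (ℝ × ℝ)) : Set (ℤ × ℤ) :=
  {a : ℤ × ℤ | a = 0 ∨ ∃ i : ℕ, toR a ∈ (i : ℝ) • F}

lemma toR_eq_zero {a : ℤ × ℤ} (h : toR a = 0) : a = 0 := by
  have h1 : (a.1 : ℝ) = 0 := congrArg Prod.fst h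
  have h2 : (a.2 : ℝ) = 0 := congrArg Prod.snd h
  have : a.1 = 0 := by exact_mod_cast h1
  have : a.2 = 0 := by exact_mod_cast h2
  exact Prod.ext ‹a.1 = 0› ‹a.2 = 0›

/-- The convex body semigroup is a submonoid of `(ℕ², +)`. -/
theorem stmt8 (F : Set (ℝ × ℝ)) (hcomp : IsCompact F) (hconv : Convex ℝ F)
    (hquad : ∀ p ∈ F, 0 ≤ p.1 ∧ 0 ≤ p.2) :
    (0 : ℤ × ℤ) ∈ cbs F ∧
    (∀ a ∈ cbs F, isNat a) ∧
    (∀ a ∈ cbs F, ∀ b ∈ cbs F, a + b ∈ cbs F) := by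
  refine ⟨Or.inl rfl, ?_, ?_⟩
  · rintro a (rfl | ⟨i, p, hp, hip⟩)
    · exact ⟨le_refl 0, le_refl 0⟩
    · obtain ⟨h1, h2⟩ := hquad p hp
      have e1 : (i : ℝ) * p.1 = (a.1 : ℝ) := congrArg Prod.fst hip
      have e2 : (i : ℝ) * p.2 = (a.2 : ℝ) := congrArg Prod.snd hip
      constructor
      · have : (0:ℝ) ≤ (a.1 : ℝ) := e1 ▸ mul_nonneg (Nat.cast_nonneg i) h1
        exact_mod_cast this
      · have : (0:ℝ) ≤ (a.2 : ℝ) := e2 ▸ mul_nonneg (Nat.cast_nonneg i) h2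
        exact_mod_cast this
  · have key : ∀ a b : ℤ × ℤ, (∃ i : ℕ, toR a ∈ (i : ℝ) • F) →
        (∃ j : ℕ, toR b ∈ (j : ℝ) • F) → a + b ∈ cbs F := by
      rintro a b ⟨i, p, hp, hip⟩ ⟨j, q, hq, hjq⟩
      have hip' : toR a = (i : ℝ) • p := hip.symm
      have hjq' : toR b = (j : ℝ) • q := hjq.symm
      have hadd : toR (a + b) = toR a + toR b := by
        simp [toR, Prod.ext_iff]
      have habr : toR (a + b) = (i : ℝ) • p + (j : ℝ) • q := by
        rw [hadd, hip', hjq']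
      rcases Nat.eq_zero_or_pos i with hi | hi
      · have : a = 0 := toR_eq_zero (by rw [hip', hi]; simp)
        subst this
        exact Or.inr ⟨j, by rw [show toR (0 + b) = toR b by norm_num, hjq']; exact Set.smul_mem_smul_set hq⟩
      rcases Nat.eq_zero_or_pos j with hj | hj
      · have : b = 0 := toR_eq_zero (by rw [hjq', hj]; simp)
        subst this
        exact Or.inr ⟨i, by rw [show toR (a + 0) = toR a by norm_num, hip']; exact Set.smul_mem_smul_set hp⟩
      have hn : (0:ℝ) < (i:ℝ) + (j:ℝ) := by positivity
      have hr : ((i:ℝ)/((i:ℝ)+(j:ℝ))) • p + ((j:ℝ)/((i:ℝ)+(j:ℝ))) • q ∈ F := by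
        apply hconv hp hq
        · positivity
        · positivity
        · field_simp
      refine Or.inr ⟨i + j, ?_⟩
      refine ⟨_, hr, ?_⟩
      show ((i + j : ℕ) : ℝ) • _ = toR (a + b)
      rw [habr, smul_add, smul_smul, smul_smul]
      push_cast
      rw [mul_div_cancel₀ _ hn.ne', mul_div_cancel₀ _ hn.ne']
    rintro a (rfl | ha) b hb
    · simpa using hb
    rcases hb with rfl | hb
    · rw [add_zero]; exact Or.inr ha
    · exact key a b ha hb
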